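/- Let A ∈ ℝ^{n×n}, B ∈ ℝ^{n×p}, R ∈ ℝ^{p×p} symmetric positive definite, Q ∈ ℝ^{n×n} symmetric positive definite, integers t₀ < N, and symmetric matrices Q_t (t₀ ≤ t ≤ N−1) and Q_∞ with Q ⪯ Q_t ⪯ Q_∞ for all t. Let V_t, K_t, Ψ_{k₁:k₂} be given by the backward Riccati recursion V_{N−1} = Q_{N−1}, K_t = −(B'V_tB + R)⁻¹B'V_tA, V_{t−1} = (A + BK_t)'V_t(A + BK_t) + Q_{t−1} + K_t'RK_t, Ψ_{k₁:k₂} = (A + BK_{k₁})⋯(A + BK_{k₂+1}), Ψ_{k:k} = I, and let V be a symmetric positive semidefinite solution of the DARE V = A'VA + Q_∞ − A'VB(B'VB + R)⁻¹B'VA. Then for all k₁ ≥ k₂ ≥ t₀ with N−1 ≥ k₁: ‖Ψ_{k₁:k₂}‖₂ ≤ √( λ_min(Q)⁻¹ · ‖V‖₂ ). -/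

import Mathlib

open Matrix
open scoped Matrix.Norms.L2Operator

namespace Stmt11Aux

variable {n p : ℕ}

/-- Conjugation preserves positive semidefiniteness (real, transpose form). -/
lemma psd_conj {a b : ℕ} {X : Matrix (Fin a) (Fin a) ℝ} (hX : X.PosSemidef)
    (C : Matrix (Fin a) (Fin b) ℝ) : (Cᵀ * X * C).PosSemidef := by
  simpa [Matrix.conjTranspose_eq_transpose_of_trivial] using hX.conjTranspose_mul_mul_same C

lemma psd_sub_trans {X Y Z : Matrix (Fin n) (Fin n) ℝ}
    (h1 : (X - Y).PosSemidef) (h2 : (Y - Z).PosSemidef) : (X - Z).PosSemidef := by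
  have := h1.add h2
  simpa using this

lemma psd_of_sub_psd {X Y : Matrix (Fin n) (Fin n) ℝ}
    (h : (X - Y).PosSemidef) (hY : Y.PosSemidef) : X.PosSemidef := by
  have := h.add hY
  simpa using this

lemma symm_of_psd {X : Matrix (Fin n) (Fin n) ℝ} (hX : X.PosSemidef) : Xᵀ = X := by
  have := hX.isHermitian
  rwa [Matrix.IsHermitian, Matrix.conjTranspose_eq_transpose_of_trivial] at this

lemma expandE (A : Matrix (Fin n) (Fin n) ℝ) (B : Matrix (Fin n) (Fin p) ℝ)
    (R : Matrix (Fin p) (Fin p) ℝ) (P : Matrix (Fin n) (Fin n) ℝ) (hP : Pᵀ = P)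
    (K : Matrix (Fin p) (Fin n) ℝ) :
    (A + B * K)ᵀ * P * (A + B * K) + Kᵀ * R * K =
      Aᵀ * P * A + Kᵀ * (Bᵀ * P * A) + (Bᵀ * P * A)ᵀ * K + Kᵀ * (Bᵀ * P * B + R) * K := by
  simp only [Matrix.transpose_add, Matrix.transpose_mul, Matrix.add_mul, Matrix.mul_add,
    Matrix.mul_assoc, Matrix.transpose_transpose, hP]
  abel

lemma abstract_square {S : Matrix (Fin p) (Fin p) ℝ} {M Kopt : Matrix (Fin p) (Fin n) ℝ}
    (h1 : S * Kopt = -M) (h2 : Koptᵀ * S = -Mᵀ) (h3 : Mᵀ * Kopt = Koptᵀ * M)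
    (X : Matrix (Fin n) (Fin n) ℝ) (K : Matrix (Fin p) (Fin n) ℝ) :
    X + Kᵀ * M + Mᵀ * K + Kᵀ * S * K =
      (X + Koptᵀ * M + Mᵀ * Kopt + Koptᵀ * S * Kopt) + (K - Kopt)ᵀ * S * (K - Kopt) := by
  have e1 : Kᵀ * S * Kopt = -(Kᵀ * M) := by rw [Matrix.mul_assoc, h1]; simp [Matrix.mul_neg]
  have e2 : Koptᵀ * S * K = -(Mᵀ * K) := by rw [h2]; simp [Matrix.neg_mul]
  have e3 : Koptᵀ * S * Kopt = -(Koptᵀ * M) := by rw [Matrix.mul_assoc, h1]; simp [Matrix.mul_neg]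
  simp only [Matrix.transpose_sub, Matrix.sub_mul, Matrix.mul_sub, e1, e2, e3, h3]
  abel

lemma gain_opt_aux (A : Matrix (Fin n) (Fin n) ℝ) (B : Matrix (Fin n) (Fin p) ℝ)
    (R : Matrix (Fin p) (Fin p) ℝ) (P : Matrix (Fin n) (Fin n) ℝ) (hPt : Pᵀ = P)
    (S : Matrix (Fin p) (Fin p) ℝ) (M Kopt : Matrix (Fin p) (Fin n) ℝ)
    (hS : S = Bᵀ * P * B + R) (hM : M = Bᵀ * P * A) (hSpsd : S.PosSemidef)
    (h1 : S * Kopt = -M) (h2 : Koptᵀ * S = -Mᵀ) (h3 : Mᵀ * Kopt = Koptᵀ * M)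
    (K : Matrix (Fin p) (Fin n) ℝ) :
    ((A + B * K)ᵀ * P * (A + B * K) + Kᵀ * R * K -
      ((A + B * Kopt)ᵀ * P * (A + B * Kopt) + Koptᵀ * R * Kopt)).PosSemidef := by
  have hexpK := expandE A B R P hPt K
  have hexpO := expandE A B R P hPt Kopt
  rw [← hS, ← hM] at hexpK hexpO
  have hid := abstract_square h1 h2 h3 (Aᵀ * P * A) K
  have key : (A + B * K)ᵀ * P * (A + B * K) + Kᵀ * R * K =
      ((A + B * Kopt)ᵀ * P * (A + B * Kopt) + Koptᵀ * R * Kopt)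
        + (K - Kopt)ᵀ * S * (K - Kopt) := by
    rw [hexpK, hexpO]; exact hid
  rw [key]
  simpa using psd_conj hSpsd (K - Kopt)

/-- The optimal gain minimizes the closed-loop quadratic cost in the Loewner order. -/
lemma gain_opt (A : Matrix (Fin n) (Fin n) ℝ) (B : Matrix (Fin n) (Fin p) ℝ)
    {R : Matrix (Fin p) (Fin p) ℝ} (hR : R.PosDef)
    {P : Matrix (Fin n) (Fin n) ℝ} (hP : P.PosSemidef)
    (K : Matrix (Fin p) (Fin n) ℝ) :
    ((A + B * K)ᵀ * P * (A + B * K) + Kᵀ * R * K -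
      ((A + B * (-((Bᵀ * P * B + R)⁻¹ * (Bᵀ * P * A))))ᵀ * P *
        (A + B * (-((Bᵀ * P * B + R)⁻¹ * (Bᵀ * P * A)))) +
        (-((Bᵀ * P * B + R)⁻¹ * (Bᵀ * P * A)))ᵀ * R *
        (-((Bᵀ * P * B + R)⁻¹ * (Bᵀ * P * A))))).PosSemidef := by
  have hSpd : (Bᵀ * P * B + R).PosDef := Matrix.PosDef.posSemidef_add (psd_conj hP B) hR
  have hSt : (Bᵀ * P * B + R)ᵀ = Bᵀ * P * B + R := symm_of_psd hSpd.posSemidef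
  have hSunit : IsUnit (Bᵀ * P * B + R).det := hSpd.det_pos.ne'.isUnit
  have hSS : (Bᵀ * P * B + R) * (Bᵀ * P * B + R)⁻¹ = 1 := Matrix.mul_nonsing_inv _ hSunit
  have hS'S : (Bᵀ * P * B + R)⁻¹ * (Bᵀ * P * B + R) = 1 := Matrix.nonsing_inv_mul _ hSunit
  have hSit : ((Bᵀ * P * B + R)⁻¹)ᵀ = (Bᵀ * P * B + R)⁻¹ := by
    rw [Matrix.transpose_nonsing_inv, hSt]
  have htr : ((Bᵀ * P * B + R)⁻¹ * (Bᵀ * P * A))ᵀ = (Bᵀ * P * A)ᵀ * (Bᵀ * P * B + R)⁻¹ := by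
    rw [Matrix.transpose_mul, hSit]
  refine gain_opt_aux A B R P (symm_of_psd hP) _ (Bᵀ * P * A) _ rfl rfl hSpd.posSemidef ?_ ?_ ?_ K
  · rw [Matrix.mul_neg, ← Matrix.mul_assoc, hSS, Matrix.one_mul]
  · rw [Matrix.transpose_neg, htr, Matrix.neg_mul, Matrix.mul_assoc, hS'S, Matrix.mul_one]
  · rw [Matrix.transpose_neg, htr, Matrix.mul_neg, Matrix.neg_mul]
    simp only [Matrix.mul_assoc]

/-- Value of the cost at the optimal gain. -/
lemma closed_loop_eq (A : Matrix (Fin n) (Fin n) ℝ) (B : Matrix (Fin n) (Fin p) ℝ)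
    {R : Matrix (Fin p) (Fin p) ℝ} (hR : R.PosDef)
    {P : Matrix (Fin n) (Fin n) ℝ} (hP : P.PosSemidef) :
    (A + B * (-((Bᵀ * P * B + R)⁻¹ * (Bᵀ * P * A))))ᵀ * P *
        (A + B * (-((Bᵀ * P * B + R)⁻¹ * (Bᵀ * P * A))))
      + (-((Bᵀ * P * B + R)⁻¹ * (Bᵀ * P * A)))ᵀ * R * (-((Bᵀ * P * B + R)⁻¹ * (Bᵀ * P * A)))
    = Aᵀ * P * A - Aᵀ * P * B * (Bᵀ * P * B + R)⁻¹ * (Bᵀ * P * A) := by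
  have hPt := symm_of_psd hP
  have hSpd : (Bᵀ * P * B + R).PosDef := Matrix.PosDef.posSemidef_add (psd_conj hP B) hR
  have hSt : (Bᵀ * P * B + R)ᵀ = Bᵀ * P * B + R := symm_of_psd hSpd.posSemidef
  have hSunit : IsUnit (Bᵀ * P * B + R).det := hSpd.det_pos.ne'.isUnit
  have hS'S : (Bᵀ * P * B + R)⁻¹ * (Bᵀ * P * B + R) = 1 := Matrix.nonsing_inv_mul _ hSunit
  have hSS : (Bᵀ * P * B + R) * (Bᵀ * P * B + R)⁻¹ = 1 := Matrix.mul_nonsing_inv _ hSunit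
  have hSit : ((Bᵀ * P * B + R)⁻¹)ᵀ = (Bᵀ * P * B + R)⁻¹ := by
    rw [Matrix.transpose_nonsing_inv, hSt]
  have htr : ((Bᵀ * P * B + R)⁻¹ * (Bᵀ * P * A))ᵀ = (Bᵀ * P * A)ᵀ * (Bᵀ * P * B + R)⁻¹ := by
    rw [Matrix.transpose_mul, hSit]
  have hMt : (Bᵀ * P * A)ᵀ = Aᵀ * (P * B) := by
    rw [Matrix.transpose_mul, Matrix.transpose_mul, hPt, Matrix.transpose_transpose]
  rw [expandE A B R P hPt]
  have a1 : (-((Bᵀ * P * B + R)⁻¹ * (Bᵀ * P * A)))ᵀ * (Bᵀ * P * A)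
      = -((Bᵀ * P * A)ᵀ * ((Bᵀ * P * B + R)⁻¹ * (Bᵀ * P * A))) := by
    rw [Matrix.transpose_neg, htr, Matrix.neg_mul, Matrix.mul_assoc]
  have a2 : (Bᵀ * P * A)ᵀ * (-((Bᵀ * P * B + R)⁻¹ * (Bᵀ * P * A)))
      = -((Bᵀ * P * A)ᵀ * ((Bᵀ * P * B + R)⁻¹ * (Bᵀ * P * A))) := by
    rw [Matrix.mul_neg]
  have a3 : (-((Bᵀ * P * B + R)⁻¹ * (Bᵀ * P * A)))ᵀ * (Bᵀ * P * B + R) *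
        (-((Bᵀ * P * B + R)⁻¹ * (Bᵀ * P * A)))
      = (Bᵀ * P * A)ᵀ * ((Bᵀ * P * B + R)⁻¹ * (Bᵀ * P * A)) := by
    rw [Matrix.transpose_neg, htr, Matrix.neg_mul, Matrix.mul_neg, Matrix.neg_mul, neg_neg,
      Matrix.mul_assoc ((Bᵀ * P * A)ᵀ * (Bᵀ * P * B + R)⁻¹),
      ← Matrix.mul_assoc (Bᵀ * P * B + R), hSS, Matrix.one_mul, Matrix.mul_assoc]
  rw [a1, a2, a3, hMt]
  simp only [Matrix.mul_assoc]
  abel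

lemma lambda_min_facts (hn : 0 < n) {Q : Matrix (Fin n) (Fin n) ℝ} (hQ : Q.PosDef) :
    0 < sInf (spectrum ℝ Q) ∧
      (Q - sInf (spectrum ℝ Q) • (1 : Matrix (Fin n) (Fin n) ℝ)).PosSemidef := by
  have : Nonempty (Fin n) := ⟨⟨0, hn⟩⟩
  have hH := hQ.isHermitian
  have hspec : spectrum ℝ Q = Set.range hH.eigenvalues := hH.spectrum_real_eq_range_eigenvalues
  have hfin : (spectrum ℝ Q).Finite := Q.finite_real_spectrum
  have hne : (spectrum ℝ Q).Nonempty := by rw [hspec]; exact Set.range_nonempty _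
  have hbdd : BddBelow (spectrum ℝ Q) := hfin.bddBelow
  have hmem : sInf (spectrum ℝ Q) ∈ spectrum ℝ Q := hne.csInf_mem hfin
  constructor
  · rw [hspec] at hmem
    obtain ⟨i, hi⟩ := hmem
    rw [hspec, ← hi]
    exact hQ.eigenvalues_pos i
  · set lam := sInf (spectrum ℝ Q) with hlam
    have hle : ∀ i, lam ≤ hH.eigenvalues i := fun i =>
      csInf_le hbdd (by rw [hspec]; exact ⟨i, rfl⟩)
    have hdiagpsd : (Matrix.diagonal (fun i => hH.eigenvalues i - lam)).PosSemidef :=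
      Matrix.posSemidef_diagonal_iff.mpr fun i => sub_nonneg.2 (hle i)
    have hU : (hH.eigenvectorUnitary : Matrix (Fin n) (Fin n) ℝ) *
        (star (hH.eigenvectorUnitary : Matrix (Fin n) (Fin n) ℝ)) = 1 :=
      (Matrix.mem_unitaryGroup_iff).mp hH.eigenvectorUnitary.2
    have hconj := hdiagpsd.mul_mul_conjTranspose_same
      (hH.eigenvectorUnitary : Matrix (Fin n) (Fin n) ℝ)
    have hkey : Q - lam • (1 : Matrix (Fin n) (Fin n) ℝ) =
        (hH.eigenvectorUnitary : Matrix (Fin n) (Fin n) ℝ) *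
          Matrix.diagonal (fun i => hH.eigenvalues i - lam) *
          (hH.eigenvectorUnitary : Matrix (Fin n) (Fin n) ℝ)ᴴ := by
      have hspec_thm := hH.spectral_theorem
      rw [Unitary.conjStarAlgAut_apply] at hspec_thm
      rw [← Matrix.star_eq_conjTranspose]
      have : Matrix.diagonal (fun i => hH.eigenvalues i - lam) =
          Matrix.diagonal (RCLike.ofReal ∘ hH.eigenvalues) -
            lam • (1 : Matrix (Fin n) (Fin n) ℝ) := by
        rw [Matrix.smul_one_eq_diagonal, ← Matrix.diagonal_sub]
        rfl
      rw [this, Matrix.mul_sub, Matrix.sub_mul]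
      rw [← hspec_thm]
      congr 1
      rw [Matrix.mul_smul, Matrix.smul_mul, Matrix.mul_one, hU]
    rw [hkey]
    exact hconj

lemma psd_dot {X : Matrix (Fin n) (Fin n) ℝ} (h : X.PosSemidef) (x : Fin n → ℝ) :
    0 ≤ x ⬝ᵥ (X *ᵥ x) := by simpa using h.dotProduct_mulVec_nonneg x

lemma dot_le_of_psd_sub {X Y : Matrix (Fin n) (Fin n) ℝ} (h : (Y - X).PosSemidef)
    (x : Fin n → ℝ) : x ⬝ᵥ (X *ᵥ x) ≤ x ⬝ᵥ (Y *ᵥ x) := by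
  have h0 := psd_dot h x
  rw [Matrix.sub_mulVec, dotProduct_sub] at h0
  linarith

lemma dot_conj (X : Matrix (Fin n) (Fin n) ℝ) (C : Matrix (Fin n) (Fin n) ℝ) (x : Fin n → ℝ) :
    x ⬝ᵥ ((Cᵀ * X * C) *ᵥ x) = (C *ᵥ x) ⬝ᵥ (X *ᵥ (C *ᵥ x)) := by
  rw [← Matrix.mulVec_mulVec, ← Matrix.mulVec_mulVec, Matrix.dotProduct_mulVec,
    Matrix.vecMul_transpose]

lemma dot_self_eq_norm_sq (y : Fin n → ℝ) :
    y ⬝ᵥ y = ‖(WithLp.equiv 2 (Fin n → ℝ)).symm y‖ ^ 2 := by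
  rw [← real_inner_self_eq_norm_sq, WithLp.equiv_symm_apply, EuclideanSpace.inner_toLp_toLp]
  simp

lemma norm_le_of_quadratic (X V : Matrix (Fin n) (Fin n) ℝ) (lam : ℝ) (hlam : 0 < lam)
    (h : ∀ x : Fin n → ℝ, lam * ((X *ᵥ x) ⬝ᵥ (X *ᵥ x)) ≤ ‖V‖ * (x ⬝ᵥ x)) :
    ‖X‖ ≤ Real.sqrt (lam⁻¹ * ‖V‖) := by
  rw [Matrix.l2_opNorm_def]
  refine ContinuousLinearMap.opNorm_le_bound _ (Real.sqrt_nonneg _) fun x => ?_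
  have happ : ((Matrix.toEuclideanLin.trans LinearMap.toContinuousLinearMap) X) x =
      (WithLp.equiv 2 (Fin n → ℝ)).symm (X *ᵥ (WithLp.equiv 2 (Fin n → ℝ)) x) := rfl
  rw [happ]
  set x' : Fin n → ℝ := (WithLp.equiv 2 (Fin n → ℝ)) x with hx'
  set y : Fin n → ℝ := X *ᵥ x' with hy
  have h1 : y ⬝ᵥ y = ‖(WithLp.equiv 2 (Fin n → ℝ)).symm y‖ ^ 2 := dot_self_eq_norm_sq y
  have h2 : x' ⬝ᵥ x' = ‖x‖ ^ 2 := by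
    have := dot_self_eq_norm_sq x'
    rwa [hx', (WithLp.equiv 2 (Fin n → ℝ)).symm_apply_apply] at this
  have hy2 : y ⬝ᵥ y ≤ (lam⁻¹ * ‖V‖) * (x' ⬝ᵥ x') := by
    calc y ⬝ᵥ y = lam⁻¹ * (lam * (y ⬝ᵥ y)) := by field_simp
    _ ≤ lam⁻¹ * (‖V‖ * (x' ⬝ᵥ x')) :=
        mul_le_mul_of_nonneg_left (h x') (inv_pos.mpr hlam).le
    _ = (lam⁻¹ * ‖V‖) * (x' ⬝ᵥ x') := by ring
  have hnormy : ‖(WithLp.equiv 2 (Fin n → ℝ)).symm y‖ = Real.sqrt (y ⬝ᵥ y) := by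
    rw [h1, Real.sqrt_sq (norm_nonneg _)]
  rw [hnormy]
  calc Real.sqrt (y ⬝ᵥ y) ≤ Real.sqrt ((lam⁻¹ * ‖V‖) * (x' ⬝ᵥ x')) := Real.sqrt_le_sqrt hy2
  _ = Real.sqrt (lam⁻¹ * ‖V‖) * Real.sqrt (x' ⬝ᵥ x') := Real.sqrt_mul (by positivity) _
  _ = Real.sqrt (lam⁻¹ * ‖V‖) * ‖x‖ := by rw [h2, Real.sqrt_sq (norm_nonneg _)]

lemma dot_Vd_le (V : Matrix (Fin n) (Fin n) ℝ) (x : Fin n → ℝ) :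
    x ⬝ᵥ (V *ᵥ x) ≤ ‖V‖ * (x ⬝ᵥ x) := by
  have hx : x ⬝ᵥ (V *ᵥ x) =
      (inner ℝ ((WithLp.equiv 2 (Fin n → ℝ)).symm x)
        ((WithLp.equiv 2 (Fin n → ℝ)).symm (V *ᵥ x)) : ℝ) := by
    rw [WithLp.equiv_symm_apply, EuclideanSpace.inner_toLp_toLp]; simp [dotProduct_comm]
  have hle := real_inner_le_norm ((WithLp.equiv 2 (Fin n → ℝ)).symm x)
    ((WithLp.equiv 2 (Fin n → ℝ)).symm (V *ᵥ x))
  have hmv : ‖(WithLp.equiv 2 (Fin n → ℝ)).symm (V *ᵥ x)‖ ≤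
      ‖V‖ * ‖(WithLp.equiv 2 (Fin n → ℝ)).symm x‖ := by
    have := V.l2_opNorm_mulVec ((WithLp.equiv 2 (Fin n → ℝ)).symm x)
    simpa using this
  have hxn : x ⬝ᵥ x = ‖(WithLp.equiv 2 (Fin n → ℝ)).symm x‖ ^ 2 := dot_self_eq_norm_sq x
  rw [hx, hxn]
  nlinarith [norm_nonneg ((WithLp.equiv 2 (Fin n → ℝ)).symm x), norm_nonneg V]

end Stmt11Aux

open Stmt11Aux

/-- **Lemma 6 (uniform boundedness of closed-loop transition products).** Along the backward
Riccati recursion with penalties `Q ⪯ Q_t ⪯ Q_∞` and `Q ≻ 0`, every closed-loop transition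
product is bounded in spectral norm by `√(λ_min(Q)⁻¹ · ‖V‖₂)`, where `V` is a positive
semidefinite DARE solution. -/
theorem stmt_11 {n p : ℕ}
    (A : Matrix (Fin n) (Fin n) ℝ) (B : Matrix (Fin n) (Fin p) ℝ)
    (R : Matrix (Fin p) (Fin p) ℝ) (hR : R.PosDef)
    (Qlow : Matrix (Fin n) (Fin n) ℝ) (hQlow : Qlow.PosDef)
    (t₀ N : ℤ) (ht₀N : t₀ < N)
    (Q : ℤ → Matrix (Fin n) (Fin n) ℝ)
    (hQsymm : ∀ t, t₀ ≤ t → t ≤ N - 1 → (Q t).IsSymm)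
    (Qinf : Matrix (Fin n) (Fin n) ℝ) (hQinfsymm : Qinf.IsSymm)
    (hQlowLe : ∀ t, t₀ ≤ t → t ≤ N - 1 → (Q t - Qlow).PosSemidef)
    (hQle : ∀ t, t₀ ≤ t → t ≤ N - 1 → (Qinf - Q t).PosSemidef)
    -- backward Riccati recursion (closed-loop form with optimal gains)
    (V : ℤ → Matrix (Fin n) (Fin n) ℝ) (K : ℤ → Matrix (Fin p) (Fin n) ℝ)
    (hVN : V (N - 1) = Q (N - 1))
    (hK : ∀ t, t₀ < t → t ≤ N - 1 → K t = -((Bᵀ * V t * B + R)⁻¹ * (Bᵀ * V t * A)))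
    (hV : ∀ t, t₀ < t → t ≤ N - 1 →
      V (t - 1) = (A + B * K t)ᵀ * V t * (A + B * K t) + Q (t - 1) + (K t)ᵀ * R * K t)
    -- DARE solution
    (Vd : Matrix (Fin n) (Fin n) ℝ) (hVd : Vd.PosSemidef)
    (hDARE : Vd = Aᵀ * Vd * A + Qinf - Aᵀ * Vd * B * (Bᵀ * Vd * B + R)⁻¹ * (Bᵀ * Vd * A))
    -- closed-loop transition products
    (Ψ : ℤ → ℤ → Matrix (Fin n) (Fin n) ℝ)
    (hΨdiag : ∀ k, Ψ k k = 1)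
    (hΨ : ∀ k₁ k₂, t₀ ≤ k₂ → k₂ ≤ k₁ → k₁ ≤ N - 2 →
      Ψ (k₁ + 1) k₂ = (A + B * K (k₁ + 1)) * Ψ k₁ k₂) :
    ∀ k₁ k₂, t₀ ≤ k₂ → k₂ ≤ k₁ → k₁ ≤ N - 1 →
      ‖Ψ k₁ k₂‖ ≤ Real.sqrt ((sInf (spectrum ℝ Qlow))⁻¹ * ‖Vd‖) := by
  intro k₁ k₂ hk₂ hk₁₂ hk₁N
  rcases Nat.eq_zero_or_pos n with hn | hn
  · subst hn
    have hzero : Ψ k₁ k₂ = 0 := Subsingleton.elim _ _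
    rw [hzero, norm_zero]
    exact Real.sqrt_nonneg _
  -- the DARE solution dominated form
  have hVdQinf : Vd - Qinf =
      (A + B * (-((Bᵀ * Vd * B + R)⁻¹ * (Bᵀ * Vd * A))))ᵀ * Vd *
        (A + B * (-((Bᵀ * Vd * B + R)⁻¹ * (Bᵀ * Vd * A))))
      + (-((Bᵀ * Vd * B + R)⁻¹ * (Bᵀ * Vd * A)))ᵀ * R *
        (-((Bᵀ * Vd * B + R)⁻¹ * (Bᵀ * Vd * A))) := by
    rw [closed_loop_eq A B hR hVd]
    conv_lhs => rw [hDARE]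
    abel
  have hVdsplit : Vd =
      (A + B * (-((Bᵀ * Vd * B + R)⁻¹ * (Bᵀ * Vd * A))))ᵀ * Vd *
        (A + B * (-((Bᵀ * Vd * B + R)⁻¹ * (Bᵀ * Vd * A))))
      + (-((Bᵀ * Vd * B + R)⁻¹ * (Bᵀ * Vd * A)))ᵀ * R *
        (-((Bᵀ * Vd * B + R)⁻¹ * (Bᵀ * Vd * A)))
      + Qinf := by
    exact sub_eq_iff_eq_add.mp hVdQinf
  have hVdQinfPsd : (Vd - Qinf).PosSemidef := by
    rw [hVdQinf]
    exact (psd_conj hVd _).add (psd_conj hR.posSemidef _)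
  -- Claim 1 : Q t ⪯ V t ⪯ Vd on the horizon
  have claim1 : ∀ j : ℕ, ∀ t : ℤ, t = N - 1 - j → t₀ ≤ t →
      (V t - Q t).PosSemidef ∧ (Vd - V t).PosSemidef := by
    intro j
    induction j with
    | zero =>
      intro t ht _
      have ht' : t = N - 1 := by push_cast at ht; omega
      subst ht'
      refine ⟨by rw [hVN, sub_self]; exact Matrix.PosSemidef.zero, ?_⟩
      rw [hVN]
      exact psd_sub_trans hVdQinfPsd (hQle (N - 1) (by omega) le_rfl)
    | succ j ih =>
      intro t ht htt₀
      have hts : t + 1 = N - 1 - j := by push_cast at ht ⊢; omega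
      obtain ⟨hs1, hs2⟩ := ih (t + 1) hts (by omega)
      have hsN : t + 1 ≤ N - 1 := by omega
      have ht₀s : t₀ < t + 1 := by omega
      have htN : t ≤ N - 1 := by omega
      have hVsQ : (V (t + 1) - Qlow).PosSemidef :=
        psd_sub_trans hs1 (hQlowLe (t + 1) ht₀s.le hsN)
      have hVs : (V (t + 1)).PosSemidef := psd_of_sub_psd hVsQ hQlow.posSemidef
      have hrec := hV (t + 1) ht₀s hsN
      rw [show t + 1 - 1 = t from by omega] at hrec
      have hKs := hK (t + 1) ht₀s hsN
      constructor
      · have heq : V t - Q t = (A + B * K (t + 1))ᵀ * V (t + 1) * (A + B * K (t + 1))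
            + (K (t + 1))ᵀ * R * (K (t + 1)) := by
          rw [hrec]; abel
        rw [heq]
        exact (psd_conj hVs _).add (psd_conj hR.posSemidef _)
      · have hterm1 : ((A + B * (-((Bᵀ * Vd * B + R)⁻¹ * (Bᵀ * Vd * A))))ᵀ *
            (Vd - V (t + 1)) *
            (A + B * (-((Bᵀ * Vd * B + R)⁻¹ * (Bᵀ * Vd * A))))).PosSemidef :=
          psd_conj hs2 _
        have hterm2 := gain_opt A B hR hVs (-((Bᵀ * Vd * B + R)⁻¹ * (Bᵀ * Vd * A)))
        rw [← hKs] at hterm2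
        have hterm3 := hQle t htt₀ htN
        have hkey : Vd - V t =
            (A + B * (-((Bᵀ * Vd * B + R)⁻¹ * (Bᵀ * Vd * A))))ᵀ * (Vd - V (t + 1)) *
              (A + B * (-((Bᵀ * Vd * B + R)⁻¹ * (Bᵀ * Vd * A))))
            + ((A + B * (-((Bᵀ * Vd * B + R)⁻¹ * (Bᵀ * Vd * A))))ᵀ * V (t + 1) *
                (A + B * (-((Bᵀ * Vd * B + R)⁻¹ * (Bᵀ * Vd * A))))
              + (-((Bᵀ * Vd * B + R)⁻¹ * (Bᵀ * Vd * A)))ᵀ * R *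
                (-((Bᵀ * Vd * B + R)⁻¹ * (Bᵀ * Vd * A)))
              - ((A + B * K (t + 1))ᵀ * V (t + 1) * (A + B * K (t + 1))
                + (K (t + 1))ᵀ * R * (K (t + 1))))
            + (Qinf - Q t) := by
          rw [hrec, Matrix.mul_sub, Matrix.sub_mul]
          nth_rewrite 1 [hVdsplit]
          abel
        rw [hkey]
        exact (hterm1.add hterm2).add hterm3
  have claim1' : ∀ t, t₀ ≤ t → t ≤ N - 1 →
      (V t - Q t).PosSemidef ∧ (Vd - V t).PosSemidef := by
    intro t htt htN
    have hco : ((N - 1 - t).toNat : ℤ) = N - 1 - t := Int.toNat_of_nonneg (by omega)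
    exact claim1 (N - 1 - t).toNat t (by rw [hco]; omega) htt
  -- Claim 2 : transition products contract the value matrices
  have claim2 : ∀ d : ℕ, ∀ k : ℤ, k = k₂ + d → k ≤ N - 1 →
      (V k₂ - (Ψ k k₂)ᵀ * V k * Ψ k k₂).PosSemidef := by
    intro d
    induction d with
    | zero =>
      intro k hk _
      have : k = k₂ := by push_cast at hk; omega
      subst this
      rw [hΨdiag]
      simp only [Matrix.transpose_one, Matrix.one_mul, Matrix.mul_one, sub_self]
      exact Matrix.PosSemidef.zero
    | succ d ih =>
      intro k hk hkN
      have hkm : k - 1 = k₂ + d := by push_cast at hk ⊢; omega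
      have hk₂k : k₂ ≤ k - 1 := by omega
      have ihm := ih (k - 1) hkm (by omega)
      have hΨrec := hΨ (k - 1) k₂ hk₂ hk₂k (by omega)
      rw [show k - 1 + 1 = k from by omega] at hΨrec
      have ht₀k : t₀ < k := by omega
      have hrec := hV k ht₀k hkN
      have hQm : (Q (k - 1)).PosSemidef :=
        psd_of_sub_psd (hQlowLe (k - 1) (by omega) (by omega)) hQlow.posSemidef
      have hstep : (V (k - 1) - (A + B * K k)ᵀ * V k * (A + B * K k)).PosSemidef := by
        have heq : V (k - 1) - (A + B * K k)ᵀ * V k * (A + B * K k)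
            = Q (k - 1) + (K k)ᵀ * R * (K k) := by rw [hrec]; abel
        rw [heq]
        exact hQm.add (psd_conj hR.posSemidef _)
      have hkey2 : V k₂ - (Ψ k k₂)ᵀ * V k * Ψ k k₂
          = (V k₂ - (Ψ (k - 1) k₂)ᵀ * V (k - 1) * Ψ (k - 1) k₂)
            + (Ψ (k - 1) k₂)ᵀ * (V (k - 1) - (A + B * K k)ᵀ * V k * (A + B * K k)) *
              Ψ (k - 1) k₂ := by
        rw [hΨrec]
        simp only [Matrix.transpose_mul, Matrix.mul_sub, Matrix.sub_mul, Matrix.mul_assoc]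
        abel
      rw [hkey2]
      exact ihm.add (psd_conj hstep _)
  -- assemble the three Loewner bounds into a quadratic-form bound
  obtain ⟨hlampos, hlampsd⟩ := lambda_min_facts hn hQlow
  set lam := sInf (spectrum ℝ Qlow) with hlamdef
  have hco : ((k₁ - k₂).toNat : ℤ) = k₁ - k₂ := Int.toNat_of_nonneg (by omega)
  have hψpsd := claim2 (k₁ - k₂).toNat k₁ (by rw [hco]; omega) hk₁N
  obtain ⟨hVk₁Q, _⟩ := claim1' k₁ (by omega) hk₁N
  obtain ⟨_, hVdk₂⟩ := claim1' k₂ hk₂ (by omega)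
  have hVk₁low : (V k₁ - Qlow).PosSemidef :=
    psd_sub_trans hVk₁Q (hQlowLe k₁ (by omega) hk₁N)
  refine norm_le_of_quadratic _ Vd lam hlampos fun x => ?_
  set y : Fin n → ℝ := Ψ k₁ k₂ *ᵥ x with hydef
  -- lam * (y ⬝ y) ≤ y ⬝ Qlow y
  have s1 : lam * (y ⬝ᵥ y) ≤ y ⬝ᵥ (Qlow *ᵥ y) := by
    have h0 := psd_dot hlampsd y
    rw [Matrix.sub_mulVec, dotProduct_sub, Matrix.smul_mulVec,
      Matrix.one_mulVec, dotProduct_smul] at h0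
    have : lam • (y ⬝ᵥ y) = lam * (y ⬝ᵥ y) := rfl
    linarith [h0]
  have s2 : y ⬝ᵥ (Qlow *ᵥ y) ≤ y ⬝ᵥ (V k₁ *ᵥ y) := dot_le_of_psd_sub hVk₁low y
  have s3 : y ⬝ᵥ (V k₁ *ᵥ y) ≤ x ⬝ᵥ (V k₂ *ᵥ x) := by
    have := dot_le_of_psd_sub hψpsd x
    rwa [dot_conj, ← hydef] at this
  have s4 : x ⬝ᵥ (V k₂ *ᵥ x) ≤ x ⬝ᵥ (Vd *ᵥ x) := dot_le_of_psd_sub hVdk₂ x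
  have s5 : x ⬝ᵥ (Vd *ᵥ x) ≤ ‖Vd‖ * (x ⬝ᵥ x) := dot_Vd_le Vd x
  linarith
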